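/- Let R be an integral domain containing ℚ, and let sp₄(R) be the symplectic Lie algebra with respect to the antidiagonal symplectic form J (J₁₄ = J₂₃ = 1, J₃₂ = J₄₁ = −1). Let 𝔤 be a ℚ-Lie subalgebra of sp₄(R). Suppose that for each of the eight roots α of sp₄ (relative to the diagonal torus), with associated root space 𝔲^α(R) = R·X_α, the set {x ∈ R : x·X_α ∈ 𝔤} contains a non-zero ideal 𝔞_α of R. Then 𝔤 contains the congruence subalgebra 𝔞·sp₄(R), where 𝔞 = ∏_α 𝔞_α is the product over all eight roots. -/

import Mathlib

open Matrix

set_option maxHeartbeats 3200000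

/-- The 4×4 antidiagonal symplectic form `J` with `J₁₄ = J₂₃ = 1`, `J₃₂ = J₄₁ = −1`. -/
def Jsp (R : Type*) [CommRing R] : Matrix (Fin 4) (Fin 4) R :=
  !![0, 0, 0, 1; 0, 0, 1, 0; 0, -1, 0, 0; -1, 0, 0, 0]

/-- The eight standard root vectors `X_α` of `sp₄` relative to the diagonal torus. -/
def spRoot (R : Type*) [CommRing R] : Fin 8 → Matrix (Fin 4) (Fin 4) R :=
  ![single 0 1 1 - single 2 3 1,
    single 1 0 1 - single 3 2 1,
    single 0 2 1 + single 1 3 1,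
    single 2 0 1 + single 3 1 1,
    single 0 3 1,
    single 3 0 1,
    single 1 2 1,
    single 2 1 1]

/-- Let `R` be an integral domain containing `ℚ` and `𝔤` a `ℚ`-Lie subalgebra of `sp₄(R)`.
If for each of the eight roots `α` the set `{x ∈ R : x·X_α ∈ 𝔤}` contains a non-zero ideal
`𝔞_α` of `R`, then `𝔤` contains the congruence subalgebra `𝔞·sp₄(R)` where `𝔞 = ∏_α 𝔞_α`. -/
theorem congruence_subalgebra_of_roots {R : Type*} [CommRing R] [IsDomain R] [Algebra ℚ R]
    (g : Submodule ℚ (Matrix (Fin 4) (Fin 4) R))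
    (hbracket : ∀ x ∈ g, ∀ y ∈ g, x * y - y * x ∈ g)
    (hsp : ∀ x ∈ g, xᵀ * Jsp R + Jsp R * x = 0)
    (a : Fin 8 → Ideal R) (hne : ∀ α, a α ≠ ⊥)
    (hroot : ∀ α : Fin 8, ∀ x ∈ a α, x • spRoot R α ∈ g) :
    ∀ r ∈ (∏ α : Fin 8, a α : Ideal R), ∀ M : Matrix (Fin 4) (Fin 4) R,
      Mᵀ * Jsp R + Jsp R * M = 0 → r • M ∈ g := by
  intro r hr M hM
  -- the product ideal is contained in each factor
  have hle : ∀ β : Fin 8, (∏ α : Fin 8, a α) ≤ a β := fun β =>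
    (Ideal.prod_le_inf).trans (Finset.inf_le (Finset.mem_univ β))
  have hrβ : ∀ β : Fin 8, ∀ t : R, (r * t) • spRoot R β ∈ g := fun β t =>
    hroot β _ (hle β (Ideal.mul_mem_right t _ hr))
  -- the product ideal is contained in products of pairs of factors
  have hpair : ∀ β γ : Fin 8, β ≠ γ → (∏ α : Fin 8, a α) ≤ a β * a γ := by
    intro β γ hβγ
    rw [← Finset.mul_prod_erase _ a (Finset.mem_univ β),
      ← Finset.mul_prod_erase _ a (Finset.mem_erase.2 ⟨hβγ.symm, Finset.mem_univ γ⟩)]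
    exact Ideal.mul_mono_right Ideal.mul_le_left
  -- Cartan elements obtained as brackets of opposite root vectors
  have hH : ∀ β γ : Fin 8, ∀ s ∈ a β * a γ,
      s • (spRoot R β * spRoot R γ - spRoot R γ * spRoot R β) ∈ g := by
    intro β γ s hs
    refine Submodule.mul_induction_on hs (fun x hx y hy => ?_) (fun x y hx hy => ?_)
    · have := hbracket _ (hroot β x hx) _ (hroot γ y hy)
      have hxy : (x * y) • (spRoot R β * spRoot R γ - spRoot R γ * spRoot R β)
          = (x • spRoot R β) * (y • spRoot R γ) - (y • spRoot R γ) * (x • spRoot R β) := by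
        rw [smul_mul_smul_comm, smul_mul_smul_comm, smul_sub, mul_comm y x]
      rw [hxy]; exact this
    · rw [add_smul]; exact g.add_mem hx hy
  have hH1 : ∀ t : R, (r * t) • (spRoot R 4 * spRoot R 5 - spRoot R 5 * spRoot R 4) ∈ g :=
    fun t => hH 4 5 _ (hpair 4 5 (by decide) (Ideal.mul_mem_right t _ hr))
  have hH2 : ∀ t : R, (r * t) • (spRoot R 6 * spRoot R 7 - spRoot R 7 * spRoot R 6) ∈ g :=
    fun t => hH 6 7 _ (hpair 6 7 (by decide) (Ideal.mul_mem_right t _ hr))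
  -- relations among the entries of M coming from the symplectic condition
  have hM' : ∀ i j, (Mᵀ * Jsp R + Jsp R * M) i j = 0 := fun i j => by rw [hM]; rfl
  have e1 := hM' 3 0
  have e2 := hM' 2 1
  have e3 := hM' 3 1
  have e4 := hM' 2 0
  have e5 := hM' 1 0
  have e6 := hM' 3 2
  simp [Jsp, mul_apply, vecMul, dotProduct, Fin.sum_univ_four, transpose_apply,
    Matrix.vecHead, Matrix.vecTail] at e1 e2 e3 e4 e5 e6
  have f1 : M 3 3 = -M 0 0 := by linear_combination -e1
  have f2 : M 2 2 = -M 1 1 := by linear_combination -e2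
  have f3 : M 2 3 = -M 0 1 := by linear_combination -e3
  have f4 : M 3 2 = -M 1 0 := by linear_combination -e4
  have f5 : M 3 1 = M 2 0 := by linear_combination -e5
  have f6 : M 1 3 = M 0 2 := by linear_combination e6
  -- brackets of the opposite long/short roots give the Cartan generators
  have c45 : spRoot R 4 * spRoot R 5 - spRoot R 5 * spRoot R 4
      = single 0 0 1 - single 3 3 1 := by
    show single 0 3 1 * single 3 0 1
        - single 3 0 1 * single 0 3 1 = _
    rw [single_mul_single_same, single_mul_single_same]; norm_num
  have c67 : spRoot R 6 * spRoot R 7 - spRoot R 7 * spRoot R 6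
      = single 1 1 1 - single 2 2 1 := by
    show single 1 2 1 * single 2 1 1
        - single 2 1 1 * single 1 2 1 = _
    rw [single_mul_single_same, single_mul_single_same]; norm_num
  -- decompose r • M as a combination of root vectors and Cartan elements
  have key : r • M =
      (r * M 0 0) • (spRoot R 4 * spRoot R 5 - spRoot R 5 * spRoot R 4)
      + (r * M 1 1) • (spRoot R 6 * spRoot R 7 - spRoot R 7 * spRoot R 6)
      + (r * M 0 1) • spRoot R 0 + (r * M 1 0) • spRoot R 1
      + (r * M 0 2) • spRoot R 2 + (r * M 2 0) • spRoot R 3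
      + (r * M 0 3) • spRoot R 4 + (r * M 3 0) • spRoot R 5
      + (r * M 1 2) • spRoot R 6 + (r * M 2 1) • spRoot R 7 := by
    rw [c45, c67]
    simp only [show spRoot R 0 = single 0 1 1 - single 2 3 1 from rfl,
      show spRoot R 1 = single 1 0 1 - single 3 2 1 from rfl,
      show spRoot R 2 = single 0 2 1 + single 1 3 1 from rfl,
      show spRoot R 3 = single 2 0 1 + single 3 1 1 from rfl,
      show spRoot R 4 = single 0 3 1 from rfl,
      show spRoot R 5 = single 3 0 1 from rfl,
      show spRoot R 6 = single 1 2 1 from rfl,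
      show spRoot R 7 = single 2 1 1 from rfl]
    ext i j
    fin_cases i <;> fin_cases j <;>
      simp +decide [Matrix.single, Matrix.of_apply, Matrix.smul_apply, Matrix.add_apply,
        Matrix.sub_apply]
    all_goals try simp only [f1, f2, f3, f4, f5, f6, true_or]
    all_goals first | trivial | ring
  rw [key]
  exact g.add_mem (g.add_mem (g.add_mem (g.add_mem (g.add_mem (g.add_mem (g.add_mem (g.add_mem
    (g.add_mem (hH1 _) (hH2 _)) (hrβ 0 _)) (hrβ 1 _)) (hrβ 2 _)) (hrβ 3 _)) (hrβ 4 _))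
    (hrβ 5 _)) (hrβ 6 _)) (hrβ 7 _)
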